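/- arXiv:2105.03220 — 2 statements merged into one kernel-verified Lean document; each statement's English description precedes it below -/
import Mathlib

section
/- Let $K, M, M_1, N_1$ be natural numbers with $K \ge 1$, $M_1 + 1 \le M$, $M + 1 \le N_1$, and suppose $N_1 - M_1$ divides $K(M - M_1)$; set $T := K(M - M_1)/(N_1 - M_1)$. Then for every natural number $k \le K$: $\binom{K}{T+1} - \binom{K-k}{T+1} < (N_1 - M)\cdot \binom{K}{T}$. Consequently, in the expected coded traffic load, the minimum $\min\left(\frac{\binom{K}{T+1} - \binom{K-k}{T+1}}{\binom{K}{T}},\; N_1 - M\right)$ always equals its first argument. -/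
/-- In the hybrid scheme with integer coded-caching parameter
`T = K (M - M₁) / (N₁ - M₁)`, for every number `k ≤ K` of nonempty coded queues, the coded
multicast load is strictly smaller than the broadcast load `N₁ - M`, i.e.
`C(K, T+1) - C(K-k, T+1) < (N₁ - M) · C(K, T)`; hence the `min` in the expected coded
traffic always equals its first argument. -/
theorem coded_min_attained (K M M₁ N₁ : ℕ) (hK : 1 ≤ K) (hM : M₁ + 1 ≤ M)
    (hN : M + 1 ≤ N₁) (hdvd : (N₁ - M₁) ∣ K * (M - M₁)) :
    ∀ k ≤ K,
      Nat.choose K (K * (M - M₁) / (N₁ - M₁) + 1) -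
          Nat.choose (K - k) (K * (M - M₁) / (N₁ - M₁) + 1) <
        (N₁ - M) * Nat.choose K (K * (M - M₁) / (N₁ - M₁)) := by
  intro k hk
  set d := N₁ - M₁ with hd
  set T := K * (M - M₁) / d with hTdef
  have hd2 : 2 ≤ d := by omega
  have hTd : T * d = K * (M - M₁) := Nat.div_mul_cancel hdvd
  have hTK : T < K := by
    by_contra h
    push_neg at h
    have h1 : K * d ≤ T * d := Nat.mul_le_mul_right d h
    rw [hTd] at h1
    have h2 : K * (M - M₁) < K * d :=
      Nat.mul_lt_mul_of_le_of_lt (le_refl K) (by omega) (by omega)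
    omega
  have hpos : 0 < Nat.choose K T := Nat.choose_pos (le_of_lt hTK)
  have hsub : (K - T) * d = K * (N₁ - M) := by
    have h3 : d - (M - M₁) = N₁ - M := by omega
    calc (K - T) * d = K * d - T * d := Nat.sub_mul K T d
      _ = K * d - K * (M - M₁) := by rw [hTd]
      _ = K * (d - (M - M₁)) := (Nat.mul_sub K d (M - M₁)).symm
      _ = K * (N₁ - M) := by rw [h3]
  have hKlt : K < (T + 1) * d := by
    have he : (T + 1) * d = K * (M - M₁) + d := by rw [add_mul, one_mul, hTd]
    have h4 : K ≤ K * (M - M₁) := Nat.le_mul_of_pos_right K (by omega)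
    omega
  have hkey : K - T < (N₁ - M) * (T + 1) := by
    have h5 : (K - T) * d < ((N₁ - M) * (T + 1)) * d := by
      rw [hsub]
      calc K * (N₁ - M) < ((T + 1) * d) * (N₁ - M) :=
            mul_lt_mul_of_pos_right hKlt (by omega)
        _ = ((N₁ - M) * (T + 1)) * d := by ring
    exact lt_of_mul_lt_mul_right h5 (Nat.zero_le d)
  have hch : Nat.choose K (T + 1) * (T + 1) = Nat.choose K T * (K - T) :=
    Nat.choose_succ_right_eq K T
  have hlt : Nat.choose K (T + 1) < (N₁ - M) * Nat.choose K T := by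
    have h6 : Nat.choose K (T + 1) * (T + 1) < ((N₁ - M) * Nat.choose K T) * (T + 1) := by
      rw [hch]
      calc Nat.choose K T * (K - T) < Nat.choose K T * ((N₁ - M) * (T + 1)) :=
            mul_lt_mul_of_pos_left hkey hpos
        _ = ((N₁ - M) * Nat.choose K T) * (T + 1) := by ring
    exact lt_of_mul_lt_mul_right h6 (Nat.zero_le _)
  calc Nat.choose K (T + 1) - Nat.choose (K - k) (T + 1) ≤ Nat.choose K (T + 1) :=
        Nat.sub_le _ _
    _ < (N₁ - M) * Nat.choose K T := hlt
end

section
/- For each SBS $c \in \mathrm{Fin}\, K$, let $p_c$ be a probability mass function on $\mathrm{Fin}\, N$ and let $Z_c \ge 0$ be the number of users of SBS $c$; let all users' requests be mutually independent, with each user of SBS $c$ requesting a content distributed according to $p_c$. Let $C_c \subseteq \mathrm{Fin}\, N$ be the set of contents cached (uncoded or in some coded group) at SBS $c$. Then the expected number of contents $n$ that are requested by at least one user at an SBS not caching $n$ equals $\sum_{n=1}^{N} \Big( 1 - \prod_{c \,:\, n \notin C_c} (1 - p_c(n))^{Z_c} \Big)$. (Since each such content is broadcast by the MBS exactly once, this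 is the expected uncoded traffic load $r_2$ of Proposition 2.) -/
open MeasureTheory
open scoped ENNReal

/-- SBS-dependent popularities: each SBS `c` has popularity distribution `p c` and `Z c`
users, all users' requests being mutually independent (product measure over the users
`(c, u)` with `u : Fin (Z c)`).  If `C c` is the set of contents cached at SBS `c`, then
the expected number of contents requested by at least one user at an SBS not caching them
(the expected uncoded traffic load `r₂` of Proposition 2) equals
`∑_n (1 - ∏_{c : n ∉ C c} (1 - p c n)^{Z c})`. -/
theorem expected_uncoded_traffic_heterogeneous (K N : ℕ) (Z : Fin K → ℕ)
    (p : Fin K → PMF (Fin N)) (C : Fin K → Finset (Fin N)) :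
    ∫⁻ f, ((Finset.univ.filter
            (fun n : Fin N => ∃ u : (c : Fin K) × Fin (Z c), n ∉ C u.1 ∧ f u = n)).card :
          ℝ≥0∞)
        ∂(Measure.pi (fun u : (c : Fin K) × Fin (Z c) => (p u.1).toMeasure)) =
      ∑ n : Fin N,
        (1 - ∏ c ∈ Finset.univ.filter (fun c : Fin K => n ∉ C c), (1 - p c n) ^ (Z c)) := by
  classical
  set ι := (c : Fin K) × Fin (Z c) with hι
  set μ := Measure.pi (fun u : ι => (p u.1).toMeasure) with hμ
  have hmeas : ∀ s : Set (ι → Fin N), MeasurableSet s := fun s =>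
    s.to_countable.measurableSet
  have hcard : ∀ f : ι → Fin N,
      ((Finset.univ.filter (fun n : Fin N => ∃ u : ι, n ∉ C u.1 ∧ f u = n)).card : ℝ≥0∞)
      = ∑ n : Fin N,
          Set.indicator {g : ι → Fin N | ∃ u, n ∉ C u.1 ∧ g u = n} (fun _ => 1) f := by
    intro f
    rw [Finset.card_filter]
    push_cast
    refine Finset.sum_congr rfl fun n _ => ?_
    by_cases h : ∃ u : ι, n ∉ C u.1 ∧ f u = n <;>
      simp [Set.indicator, h]
  calc ∫⁻ f, ((Finset.univ.filter
            (fun n : Fin N => ∃ u : ι, n ∉ C u.1 ∧ f u = n)).card : ℝ≥0∞) ∂μ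
      = ∫⁻ f, ∑ n : Fin N,
          Set.indicator {g : ι → Fin N | ∃ u, n ∉ C u.1 ∧ g u = n} (fun _ => 1) f ∂μ := by
        simp_rw [hcard]
    _ = ∑ n : Fin N, ∫⁻ f,
          Set.indicator {g : ι → Fin N | ∃ u, n ∉ C u.1 ∧ g u = n} (fun _ => 1) f ∂μ := by
        refine lintegral_finset_sum _ fun n _ => ?_
        exact measurable_const.indicator (hmeas _)
    _ = ∑ n : Fin N, μ {g : ι → Fin N | ∃ u, n ∉ C u.1 ∧ g u = n} := by
        refine Finset.sum_congr rfl fun n _ => ?_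
        rw [lintegral_indicator (hmeas _), setLIntegral_one]
    _ = _ := by
        refine Finset.sum_congr rfl fun n _ => ?_
        have hcompl : {g : ι → Fin N | ∃ u, n ∉ C u.1 ∧ g u = n}ᶜ
            = Set.pi Set.univ (fun u : ι => if n ∈ C u.1 then Set.univ else ({n}ᶜ : Set (Fin N))) := by
          ext g
          simp only [Set.mem_compl_iff, Set.mem_setOf_eq, not_exists, Set.mem_pi,
            Set.mem_univ, true_implies]
          constructor
          · intro h u
            by_cases hc : n ∈ C u.1 <;> simp [hc]
            · intro he; exact h u ⟨hc, he⟩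
          · intro h u ⟨hc, he⟩
            have := h u
            simp [hc] at this
            exact this he
        have hμc : μ {g : ι → Fin N | ∃ u, n ∉ C u.1 ∧ g u = n}
            = 1 - μ ({g : ι → Fin N | ∃ u, n ∉ C u.1 ∧ g u = n}ᶜ) := by
          rw [← prob_compl_eq_one_sub (hmeas _), compl_compl]
        rw [hμc, hcompl, hμ, Measure.pi_pi]
        congr 1
        have : ∀ u : ι, (p u.1).toMeasure
            (if n ∈ C u.1 then Set.univ else ({n}ᶜ : Set (Fin N)))
            = if n ∈ C u.1 then 1 else (1 - p u.1 n) := by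
          intro u
          by_cases hc : n ∈ C u.1
          · simp [hc]
          · rw [if_neg hc, if_neg hc,
              measure_compl (measurableSet_singleton n) (measure_ne_top _ _),
              PMF.toMeasure_apply_singleton _ _ (measurableSet_singleton n), measure_univ]
        simp_rw [this]
        rw [← Finset.univ_sigma_univ, Finset.prod_sigma, Finset.prod_filter]
        refine Finset.prod_congr rfl fun c _ => ?_
        by_cases hc : n ∈ C c <;> simp [hc, Finset.prod_const]
end
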